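/- Let f: ℝ^n → ℝ be convex and differentiable with minimizer x*, and let R = ‖x^0 − x*‖₂. Given points y^0,…,y^{k−1}, positive weights a_1,…,a_k with A_k = Σ_{i=1}^k a_i, let l^{k−1}(x) = Σ_{i=0}^{k−1} a_{i+1}(f(y^i) + ⟨∇f(y^i), x − y^i⟩), define f̂^k = min_{‖x − x^0‖₂ ≤ R} (1/A_k) l^{k−1}(x), and suppose x^k satisfies A_k f(x^k) ≤ min_{x∈ℝ^n} [ (1/2)‖x^0 − x‖₂² + l^{k−1}(x) ] (as guaranteed by Algorithm AGMsDR). Then f̂^k ≥ (1/A_k) min_x[(1/2)‖x^0−x‖₂² + l^{k−1}(x)] − R²/(2A_k), f̂^k ≤ f(x*), and consequently f(x^k) − f(x*) ≤ f(x^k) − f̂^k ≤ R²/(2A_k). In particular, the condition f(x^k) − f̂^k ≤ ε guarantees f(x^k) − f(x*) ≤ ε. -/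

import Mathlib

open scoped RealInnerProductSpace

private lemma grad_ineq {n : ℕ} {f : EuclideanSpace ℝ (Fin n) → ℝ}
    {g : EuclideanSpace ℝ (Fin n) → EuclideanSpace ℝ (Fin n)}
    (hdiff : ∀ z, HasGradientAt f (g z) z)
    (hconv : ConvexOn ℝ Set.univ f)
    (y x : EuclideanSpace ℝ (Fin n)) :
    f y + ⟪g y, x - y⟫ ≤ f x := by
  set c : ℝ → EuclideanSpace ℝ (Fin n) := fun t => y + t • (x - y) with hc
  have hφconv : ConvexOn ℝ Set.univ (f ∘ (AffineMap.lineMap y x : ℝ →ᵃ[ℝ] _)) := by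
    simpa using hconv.comp_affineMap (AffineMap.lineMap y x : ℝ →ᵃ[ℝ] _)
  have hder : HasDerivAt (f ∘ (AffineMap.lineMap y x : ℝ →ᵃ[ℝ] _)) ⟪g y, x - y⟫ 0 := by
    have h1 : HasFDerivAt f (InnerProductSpace.toDual ℝ _ (g y)) y :=
      (hasGradientAt_iff_hasFDerivAt).mp (hdiff y)
    have h2 : HasDerivAt (fun t : ℝ => (AffineMap.lineMap y x : ℝ →ᵃ[ℝ] _) t) (x - y) 0 := by
      simp only [AffineMap.lineMap_apply_module]
      have hx' : HasDerivAt (fun t : ℝ => t • x) ((1:ℝ) • x) 0 :=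
        (hasDerivAt_id (0:ℝ)).smul_const x
      have hy' : HasDerivAt (fun t : ℝ => (1 - t) • y) ((-1:ℝ) • y) 0 :=
        ((hasDerivAt_id (0:ℝ)).const_sub 1).smul_const y
      have := hx'.add hy'
      exact (this.congr_deriv (by simp [sub_eq_add_neg])).congr_of_eventuallyEq
        (Filter.Eventually.of_forall fun t => add_comm _ _)
    have h1' : HasFDerivAt f (InnerProductSpace.toDual ℝ _ (g y))
        ((AffineMap.lineMap y x : ℝ →ᵃ[ℝ] _) 0) := by
      simpa using h1
    simpa using h1'.comp_hasDerivAt 0 h2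
  have hslope := hφconv.le_slope_of_hasDerivAt (Set.mem_univ (0:ℝ)) (Set.mem_univ (1:ℝ))
    (by norm_num) hder
  have : slope (f ∘ (AffineMap.lineMap y x : ℝ →ᵃ[ℝ] _)) 0 1 = f x - f y := by
    simp [slope, Function.comp]
  rw [this] at hslope
  linarith

/-- Online stopping criterion for the AGMsDR method: with
`l^{k-1}(x) = Σ_{i<k} a_{i+1} (f (y i) + ⟪∇f (y i), x - y i⟫)`,
`f̂^k = min_{‖x - x⁰‖ ≤ R} l^{k-1}(x) / A_k` and
`A_k f (x^k) ≤ min_x [ (1/2)‖x⁰ - x‖² + l^{k-1}(x) ]`, one has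
`f̂^k ≥ (1/A_k) min_x [(1/2)‖x⁰ - x‖² + l^{k-1}(x)] - R²/(2 A_k)`, `f̂^k ≤ f x*`, and
`f (x^k) - f x* ≤ f (x^k) - f̂^k ≤ R²/(2 A_k)`; in particular `f (x^k) - f̂^k ≤ ε`
guarantees `f (x^k) - f x* ≤ ε`. -/
theorem stmt_7 (n : ℕ)
    (f : EuclideanSpace ℝ (Fin n) → ℝ)
    (g : EuclideanSpace ℝ (Fin n) → EuclideanSpace ℝ (Fin n))
    (hdiff : ∀ z, HasGradientAt f (g z) z)
    (hconv : ConvexOn ℝ Set.univ f)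
    (xstar : EuclideanSpace ℝ (Fin n)) (hstar : ∀ z, f xstar ≤ f z)
    (x0 : EuclideanSpace ℝ (Fin n)) (R : ℝ) (hR : R = ‖x0 - xstar‖)
    (k : ℕ) (hk : 0 < k)
    (y : ℕ → EuclideanSpace ℝ (Fin n)) (a : ℕ → ℝ) (hapos : ∀ i, 0 < a (i + 1))
    (Ak : ℝ) (hAk : Ak = ∑ i ∈ Finset.range k, a (i + 1))
    (l : EuclideanSpace ℝ (Fin n) → ℝ)
    (hl : ∀ z, l z = ∑ i ∈ Finset.range k, a (i + 1) * (f (y i) + ⟪g (y i), z - y i⟫))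
    (fhat : ℝ)
    (hfhat : IsLeast ((fun z => (1 / Ak) * l z) '' {z | ‖z - x0‖ ≤ R}) fhat)
    (xk : EuclideanSpace ℝ (Fin n))
    (hxk : ∀ z, Ak * f xk ≤ (1 / 2) * ‖x0 - z‖ ^ 2 + l z) :
    ((1 / Ak) * (⨅ z : EuclideanSpace ℝ (Fin n), ((1 / 2) * ‖x0 - z‖ ^ 2 + l z))
        - R ^ 2 / (2 * Ak) ≤ fhat) ∧
      fhat ≤ f xstar ∧
      (f xk - f xstar ≤ f xk - fhat ∧ f xk - fhat ≤ R ^ 2 / (2 * Ak)) ∧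
      (∀ ε : ℝ, f xk - fhat ≤ ε → f xk - f xstar ≤ ε) := by
  have hA : 0 < Ak := by
    rw [hAk]
    exact Finset.sum_pos (fun i _ => hapos i) (Finset.nonempty_range_iff.mpr hk.ne')
  have hlub : ∀ x, l x ≤ Ak * f x := by
    intro x
    rw [hl, hAk, Finset.sum_mul]
    refine Finset.sum_le_sum fun i _ => ?_
    exact mul_le_mul_of_nonneg_left (grad_ineq hdiff hconv (y i) x) (hapos i).le
  obtain ⟨⟨zmin, hz, heq⟩, hlb⟩ := hfhat
  have hlz : l zmin = Ak * fhat := by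
    field_simp at heq
    linarith
  have hRnn : 0 ≤ R := hR ▸ norm_nonneg _
  -- fhat ≤ f xstar
  have h2 : fhat ≤ f xstar := by
    have hmem : xstar ∈ {z | ‖z - x0‖ ≤ R} := by
      simp only [Set.mem_setOf_eq, hR, norm_sub_rev x0 xstar, le_refl]
    have := hlb ⟨xstar, hmem, rfl⟩
    calc fhat ≤ (1 / Ak) * l xstar := this
      _ ≤ (1 / Ak) * (Ak * f xstar) :=
        mul_le_mul_of_nonneg_left (hlub xstar) (by positivity)
      _ = f xstar := by field_simp
  -- key bound at zmin
  have hnz : ‖x0 - zmin‖ ^ 2 ≤ R ^ 2 := by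
    have : ‖x0 - zmin‖ ≤ R := by rwa [norm_sub_rev]
    nlinarith [norm_nonneg (x0 - zmin)]
  have hxkbound : Ak * f xk ≤ R ^ 2 / 2 + Ak * fhat := by
    have := hxk zmin
    rw [hlz] at this
    linarith
  have h3b : f xk - fhat ≤ R ^ 2 / (2 * Ak) := by
    rw [le_div_iff₀ (by positivity : (0:ℝ) < 2 * Ak)]
    nlinarith
  refine ⟨?_, h2, ⟨by linarith, h3b⟩, fun ε hε => by linarith⟩
  -- infimum bound
  have hbdd : BddBelow (Set.range fun z : EuclideanSpace ℝ (Fin n) =>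
      (1 / 2) * ‖x0 - z‖ ^ 2 + l z) := ⟨Ak * f xk, by rintro _ ⟨z, rfl⟩; exact hxk z⟩
  have hinf : (⨅ z : EuclideanSpace ℝ (Fin n), ((1 / 2) * ‖x0 - z‖ ^ 2 + l z))
      ≤ R ^ 2 / 2 + Ak * fhat := by
    refine le_trans (ciInf_le hbdd zmin) ?_
    rw [hlz]; linarith
  have h1 : (1 / Ak) * (⨅ z : EuclideanSpace ℝ (Fin n), ((1 / 2) * ‖x0 - z‖ ^ 2 + l z))
      ≤ (1 / Ak) * (R ^ 2 / 2 + Ak * fhat) :=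
    mul_le_mul_of_nonneg_left hinf (by positivity)
  have : (1 / Ak) * (R ^ 2 / 2 + Ak * fhat) = R ^ 2 / (2 * Ak) + fhat := by
    field_simp
  linarith [this ▸ h1]
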